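/- Given a fractional packing \(\mathcal{P}\) of odd \(T\)-walks in \((G, T, cap)\), the symmetrized lift \(\mathcal{Q} = \frac{1}{2}(\widetilde{\mathcal{P}} + \widetilde{\mathcal{P}}')\) satisfies \(\mathcal{Q}(xy') = \frac{1}{2}\mathcal{P}(xy) \leq \widetilde{cap}(xy')\) for every edge \(xy \in E(G)\); in particular \(\mathcal{Q}\) is a feasible multiflow in \((\widetilde{G}, \widetilde{T}, \widetilde{cap})\) of the same value as \(\mathcal{P}\). -/

import Mathlib

/-- The bipartite double cover `G̃` of `G`. -/
def doubleCover {V : Type*} (G : SimpleGraph V) : SimpleGraph (V ⊕ V) where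
  Adj a b := ∃ u v, G.Adj u v ∧
    ((a = Sum.inl u ∧ b = Sum.inr v) ∨ (a = Sum.inr u ∧ b = Sum.inl v))
  symm := by
    constructor
    rintro a b ⟨u, v, h, (⟨rfl, rfl⟩ | ⟨rfl, rfl⟩)⟩
    · exact ⟨v, u, h.symm, Or.inr ⟨rfl, rfl⟩⟩
    · exact ⟨v, u, h.symm, Or.inl ⟨rfl, rfl⟩⟩
  loopless := by
    constructor
    rintro a ⟨u, v, h, (⟨rfl, h2⟩ | ⟨rfl, h2⟩)⟩ <;> simp at h2

/-- Capacities on the double cover: each of the two copies of edge `uv` gets `½ cap(uv)`. -/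
noncomputable def capTilde {V : Type*} (cap : Sym2 V → ℝ) (e : Sym2 (V ⊕ V)) : ℝ :=
  cap (Sym2.map (Sum.elim id id) e) / 2

/-- Embed `V` into `V ⊕ V` according to a side. -/
def emb {V : Type*} (s : Bool) (v : V) : V ⊕ V := if s then Sum.inl v else Sum.inr v

lemma adj_emb {V : Type*} {G : SimpleGraph V} {u v : V} (h : G.Adj u v) (s : Bool) :
    (doubleCover G).Adj (emb s u) (emb (!s) v) := by
  cases s
  · exact ⟨u, v, h, Or.inr ⟨rfl, rfl⟩⟩
  · exact ⟨u, v, h, Or.inl ⟨rfl, rfl⟩⟩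

/-- Lift of a walk to the double cover, starting on side `s`. -/
def liftWalk {V : Type*} {G : SimpleGraph V} :
    ∀ {a b : V} (p : G.Walk a b) (s : Bool),
      (doubleCover G).Walk (emb s a) (emb (Bool.xor s (Nat.bodd p.length)) b)
  | _, _, .nil, s => (SimpleGraph.Walk.nil).copy rfl (by simp)
  | _, _, .cons h p, s =>
      ((SimpleGraph.Walk.cons (adj_emb h s) (liftWalk p (!s)))).copy rfl
        (by
          congr 1
          cases s <;> cases hb : Nat.bodd p.length <;>
            simp [SimpleGraph.Walk.length_cons, Nat.bodd_succ, hb])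

/-- Key counting fact: occurrences of the edge `uv` in a walk split between its two lifts. -/
lemma liftWalk_edges_count {V : Type*} [DecidableEq V] {G : SimpleGraph V} {u v : V}
    (hne : u ≠ v) :
    ∀ {a b : V} (p : G.Walk a b) (s : Bool),
      (liftWalk p s).edges.count s(Sum.inl u, Sum.inr v)
        + (liftWalk p (!s)).edges.count s(Sum.inl u, Sum.inr v)
      = p.edges.count s(u, v)
  | _, _, .nil, s => by simp only [liftWalk, SimpleGraph.Walk.edges_copy]; simp
  | _, _, .cons (v := c) h p, s => by
      rename_i a b
      have IH := liftWalk_edges_count hne p (!s)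
      rw [Bool.not_not] at IH
      have e1 : (liftWalk (.cons h p) s).edges
          = s(emb s a, emb (!s) c) :: (liftWalk p (!s)).edges := by
        rw [liftWalk, SimpleGraph.Walk.edges_copy, SimpleGraph.Walk.edges_cons]
      have e2 : (liftWalk (.cons h p) (!s)).edges
          = s(emb (!s) a, emb s c) :: (liftWalk p s).edges := by
        rw [liftWalk, SimpleGraph.Walk.edges_copy, SimpleGraph.Walk.edges_cons, Bool.not_not]
      rw [e1, e2, SimpleGraph.Walk.edges_cons]
      rw [List.count_cons, List.count_cons, List.count_cons]
      have key : (if s(emb s a, emb (!s) c) = s(Sum.inl u, Sum.inr v) then 1 else 0)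
          + (if s(emb (!s) a, emb s c) = s(Sum.inl u, Sum.inr v) then 1 else 0)
          = (if s(a, c) = s(u, v) then 1 else 0) := by
        cases s <;>
          · simp only [emb, if_true, if_false, Bool.not_true, Bool.not_false, Sym2.eq_iff]
            by_cases h1 : a = u <;> by_cases h2 : c = v <;> by_cases h3 : a = v <;>
              by_cases h4 : c = u <;> simp_all
      simp only [beq_iff_eq]
      omega

/-- First lift: from `inl a` to `inr b` (uses odd length). -/
def lift1 {V : Type*} {G : SimpleGraph V} {a b : V} (p : G.Walk a b)
    (h : Nat.bodd p.length = true) : (doubleCover G).Walk (Sum.inl a) (Sum.inr b) :=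
  (liftWalk p true).copy (by simp [emb]) (by simp [emb, h])

/-- Second (symmetric) lift, reversed: from `inl b` to `inr a`. -/
def lift2 {V : Type*} {G : SimpleGraph V} {a b : V} (p : G.Walk a b)
    (h : Nat.bodd p.length = true) : (doubleCover G).Walk (Sum.inl b) (Sum.inr a) :=
  ((liftWalk p false).copy (by simp [emb]) (by simp [emb, h])).reverse

lemma lift_count {V : Type*} [DecidableEq V] {G : SimpleGraph V} {u v : V}
    (hne : u ≠ v) {a b : V} (p : G.Walk a b) (h : Nat.bodd p.length = true) :
    (lift1 p h).edges.count s(Sum.inl u, Sum.inr v)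
      + (lift2 p h).edges.count s(Sum.inl u, Sum.inr v)
    = p.edges.count s(u, v) := by
  have h1 : (lift1 p h).edges.count s(Sum.inl u, Sum.inr v)
      = (liftWalk p true).edges.count s(Sum.inl u, Sum.inr v) := by
    simp [lift1]
  have h2 : (lift2 p h).edges.count s(Sum.inl u, Sum.inr v)
      = (liftWalk p false).edges.count s(Sum.inl u, Sum.inr v) := by
    simp [lift2, SimpleGraph.Walk.edges_reverse, List.count_reverse]
  rw [h1, h2]
  exact liftWalk_edges_count hne p true

/-- Given a fractional packing `𝒫` of odd `T`-walks in `(G, T, cap)`, there is a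
feasible multiflow `𝒬` in `(G̃, T̃, c̃ap)` with commodity graph `H_T` whose load on
each edge `xy'` equals `½ 𝒫(xy) ≤ c̃ap(xy')`, and whose value equals that of `𝒫`. -/
theorem stmt10 {V : Type*} [DecidableEq V] (G : SimpleGraph V)
    (T : Set V) (cap : Sym2 V → ℝ)
    (m : ℕ) (α : Fin m → ℝ) (hα : ∀ i, 0 ≤ α i)
    (x y : Fin m → V) (W : ∀ i, G.Walk (x i) (y i))
    (hterm : ∀ i, x i ∈ T ∧ y i ∈ T ∧ x i ≠ y i)
    (hodd : ∀ i, Odd (W i).length)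
    (hpack : ∀ e ∈ G.edgeSet, ∑ i, α i * ((W i).edges.count e : ℝ) ≤ cap e) :
    ∃ (m' : ℕ) (β : Fin m' → ℝ) (x' y' : Fin m' → V)
      (Q : ∀ j, (doubleCover G).Walk (Sum.inl (x' j)) (Sum.inr (y' j))),
      (∀ j, 0 ≤ β j) ∧
      (∀ j, x' j ∈ T ∧ y' j ∈ T ∧ x' j ≠ y' j) ∧
      -- the load of `𝒬` on each edge `xy'` is `½ 𝒫(xy)` and is within capacity:
      (∀ u v, G.Adj u v →
        ∑ j, β j * (((Q j).edges.count s(Sum.inl u, Sum.inr v) : ℕ) : ℝ)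
          = (1 / 2) * ∑ i, α i * ((W i).edges.count s(u, v) : ℝ) ∧
        ∑ j, β j * (((Q j).edges.count s(Sum.inl u, Sum.inr v) : ℕ) : ℝ)
          ≤ capTilde cap s(Sum.inl u, Sum.inr v)) ∧
      -- same value:
      ∑ j, β j = ∑ i, α i := by
  have hbodd : ∀ i, Nat.bodd (W i).length = true := by
    intro i
    have h1 : (W i).length % 2 = 1 := Nat.odd_iff.mp (hodd i)
    have h2 := Nat.mod_two_of_bodd (W i).length
    cases hb : Nat.bodd (W i).length
    · rw [hb] at h2; simp at h2; omega
    · rfl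
  refine ⟨m + m, Fin.addCases (fun i => α i / 2) (fun i => α i / 2),
    Fin.addCases x y, Fin.addCases y x,
    fun j => Fin.addCases (motive := fun j =>
        (doubleCover G).Walk (Sum.inl (Fin.addCases (m := m) (n := m) x y j))
          (Sum.inr (Fin.addCases (m := m) (n := m) y x j)))
      (fun i => (lift1 (W i) (hbodd i)).copy
        (by rw [Fin.addCases_left])
        (by rw [Fin.addCases_left]))
      (fun i => (lift2 (W i) (hbodd i)).copy
        (by rw [Fin.addCases_right])
        (by rw [Fin.addCases_right])) j,
    ?_, ?_, ?_, ?_⟩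
  · intro j
    refine Fin.addCases (fun i => ?_) (fun i => ?_) j <;>
      simp only [Fin.addCases_left, Fin.addCases_right] <;>
      exact div_nonneg (hα i) (by norm_num)
  · intro j
    refine Fin.addCases (fun i => ?_) (fun i => ?_) j <;>
      simp only [Fin.addCases_left, Fin.addCases_right]
    · exact hterm i
    · exact ⟨(hterm i).2.1, (hterm i).1, (hterm i).2.2.symm⟩
  · intro u v huv
    have hne : u ≠ v := huv.ne
    have hload : ∑ j : Fin (m + m),
        Fin.addCases (motive := fun _ => ℝ) (fun i => α i / 2) (fun i => α i / 2) j *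
          ((Fin.addCases (motive := fun j =>
              (doubleCover G).Walk (Sum.inl (Fin.addCases (m := m) (n := m) x y j))
                (Sum.inr (Fin.addCases (m := m) (n := m) y x j)))
            (fun i => (lift1 (W i) (hbodd i)).copy
              (by rw [Fin.addCases_left])
              (by rw [Fin.addCases_left]))
            (fun i => (lift2 (W i) (hbodd i)).copy
              (by rw [Fin.addCases_right])
              (by rw [Fin.addCases_right])) j).edges.count
              s(Sum.inl u, Sum.inr v) : ℝ)
        = (1 / 2) * ∑ i, α i * ((W i).edges.count s(u, v) : ℝ) := by
      rw [Fin.sum_univ_add]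
      simp only [Fin.addCases_left, Fin.addCases_right, SimpleGraph.Walk.edges_copy]
      rw [← Finset.sum_add_distrib, Finset.mul_sum]
      refine Finset.sum_congr rfl fun i _ => ?_
      have hk := lift_count hne (W i) (hbodd i)
      have hk' : ((lift1 (W i) (hbodd i)).edges.count s(Sum.inl u, Sum.inr v) : ℝ)
          + ((lift2 (W i) (hbodd i)).edges.count s(Sum.inl u, Sum.inr v) : ℝ)
          = ((W i).edges.count s(u, v) : ℝ) := by exact_mod_cast hk
      rw [← hk']; ring
    refine ⟨hload, ?_⟩
    rw [hload]
    have hcap : capTilde cap s(Sum.inl u, Sum.inr v) = cap s(u, v) / 2 := by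
      simp [capTilde]
    rw [hcap]
    have := hpack s(u, v) (G.mem_edgeSet.mpr huv)
    linarith
  · rw [Fin.sum_univ_add]
    simp only [Fin.addCases_left, Fin.addCases_right]
    rw [← Finset.sum_add_distrib]
    exact Finset.sum_congr rfl fun i _ => by ring
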